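/- Let d ≥ 1 be an integer, 0 < α < 2, 0 < β < 1 with α/β < d < α(1+β)/β and β > d/(d+α). Let q : ℝ^d → [0,∞) be measurable with q(x) ≤ c₂/(1+‖x‖^{d+α}) for some c₂ > 0, and set p_t(x) = t^{−d/α} q(t^{−1/α} x) for t > 0. Fix 0 ≤ u < v < s < t and z > 0, and for T > 0 define U_T(x,r) = z( 𝟙_{[0,s+T]}(r) ∫_{s+T}^{t+T} p_{r'−r}(x) dr' + 𝟙_{(s+T,t+T]}(r) ∫_r^{t+T} p_{r'−r}(x) dr' ) and R(x,r) = 𝟙_{[0,u]}(r) ∫_u^v p_{r'−r}(x) dr' + 𝟙_{(u,v]}(r) ∫_r^v p_{r'−r}(x) dr'. Then there is a constant C > 0 (independent of T) such that for all T ≥ 1: ∫_{ℝ^d} ∫_0^∞ ( (U_T+R)^{1+β} − U_T^{1+β} − R^{1+β} )(x,r) dr dx ≤ C·T^{−d/α}. -/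

import Mathlib

open MeasureTheory

/-- The density at time `t` of a self-similar transition kernel on `ℝ^d`:
`p_t(x) = t^{−d/α} q(t^{−1/α} x)`. -/
noncomputable def pker (d : ℕ) (α : ℝ) (q : EuclideanSpace ℝ (Fin d) → ℝ) (t : ℝ)
    (x : EuclideanSpace ℝ (Fin d)) : ℝ :=
  t ^ (-(d : ℝ) / α) * q ((t ^ (-(1 : ℝ) / α)) • x)

section AuxStmt8

open Real Set

lemma aux_rpow_subadd {a x β : ℝ} (ha : 0 ≤ a) (hx : 0 ≤ x) (hβ0 : 0 ≤ β) (hβ1 : β ≤ 1) :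
    (a + x) ^ β ≤ a ^ β + x ^ β := by
  have h := NNReal.rpow_add_le_add_rpow a.toNNReal x.toNNReal hβ0 hβ1
  rw [← Real.toNNReal_add ha hx] at h
  have h2 := NNReal.coe_le_coe.2 h
  push_cast [Real.coe_toNNReal _ ha, Real.coe_toNNReal _ hx,
    Real.coe_toNNReal _ (add_nonneg ha hx)] at h2
  exact h2

lemma aux_key_pointwise {a b β : ℝ} (ha : 0 ≤ a) (hb : 0 ≤ b) (hβ0 : 0 < β) (hβ1 : β < 1) :
    (a + b) ^ (1 + β) - a ^ (1 + β) - b ^ (1 + β) ≤ (1 + β) * b * a ^ β := by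
  rcases eq_or_lt_of_le hb with rfl | hb'
  · simp [Real.zero_rpow (show (1:ℝ)+β ≠ 0 by positivity)]
  set p : ℝ := 1 + β with hp
  have hp1 : 1 ≤ p := by simp [hp]; linarith
  have hcont : ContinuousOn (fun x : ℝ => (a + x) ^ p - x ^ p) (Icc 0 b) := by
    apply ContinuousOn.sub
    · exact ((continuous_const.add continuous_id).rpow_const
        (fun x => Or.inr (by positivity))).continuousOn
    · exact (continuous_id.rpow_const (fun x => Or.inr (by positivity))).continuousOn
  have hderiv : ∀ x ∈ Ioo (0:ℝ) b, HasDerivAt (fun x : ℝ => (a + x) ^ p - x ^ p)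
      (p * (a + x) ^ (p - 1) - p * x ^ (p - 1)) x := by
    intro x hx
    have h1 : HasDerivAt (fun x : ℝ => (a + x) ^ p) (p * (a + x) ^ (p - 1)) x := by
      have hb1 : HasDerivAt (fun y : ℝ => y ^ p) (p * (a + x) ^ (p - 1)) (a + x) :=
        Real.hasDerivAt_rpow_const (Or.inr hp1)
      have hb2 : HasDerivAt (fun x : ℝ => a + x) 1 x := (hasDerivAt_id x).const_add a
      have hc := hb1.comp x hb2
      rw [mul_one] at hc
      exact hc
    have h2 : HasDerivAt (fun x : ℝ => x ^ p) (p * x ^ (p - 1)) x :=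
      Real.hasDerivAt_rpow_const (Or.inl hx.1.ne')
    exact h1.sub h2
  obtain ⟨c, hc, hceq⟩ := exists_hasDerivAt_eq_slope _ _ hb' hcont hderiv
  have hval : (a + b) ^ p - b ^ p - a ^ p = (p * (a + c) ^ (p - 1) - p * c ^ (p - 1)) * b := by
    have h0 : (0:ℝ) ^ p = 0 := Real.zero_rpow (by positivity)
    rw [hceq, h0]
    field_simp
    simp only [add_zero, sub_zero]
    ring
  have hsub : (a + c) ^ (p - 1) - c ^ (p - 1) ≤ a ^ (p - 1) := by
    have := aux_rpow_subadd (β := p - 1) ha hc.1.le (by rw [hp]; linarith) (by rw [hp]; linarith)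
    linarith
  have hpm : p - 1 = β := by simp [hp]
  calc (a + b) ^ p - a ^ p - b ^ p = (p * (a + c) ^ (p - 1) - p * c ^ (p - 1)) * b := by
        rw [← hval]; ring
    _ ≤ (p * a ^ (p - 1)) * b := by
        apply mul_le_mul_of_nonneg_right _ hb
        have hpnn : (0:ℝ) ≤ p := by linarith
        nlinarith
    _ = (1 + β) * b * a ^ β := by rw [hpm]; ring

lemma aux_min_rpow {a b c : ℝ} (ha : 0 ≤ a) (hb : 0 ≤ b) (hc : 0 ≤ c) :
    (min a b) ^ c = min (a ^ c) (b ^ c) := by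
  rcases le_total a b with h | h
  · rw [min_eq_left h, min_eq_left (Real.rpow_le_rpow ha h hc)]
  · rw [min_eq_right h, min_eq_right (Real.rpow_le_rpow hb h hc)]

lemma aux_ball_subset {d : ℕ} {p τ : ℝ} (hp : 0 < p) (hτ : 0 < τ) :
    {x : EuclideanSpace ℝ (Fin d) | τ ≤ ‖x‖ ^ (-p)} ⊆ Metric.closedBall 0 (τ ^ (-p⁻¹)) := by
  intro x hx
  simp only [mem_setOf_eq] at hx
  have hx0 : x ≠ 0 := by
    rintro rfl
    rw [norm_zero, Real.zero_rpow (neg_ne_zero.2 hp.ne')] at hx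
    linarith
  have h2 : (‖x‖ ^ (-p)) ^ (-p⁻¹) ≤ τ ^ (-p⁻¹) :=
    Real.rpow_le_rpow_of_nonpos hτ hx (neg_nonpos.2 (inv_nonneg.2 hp.le))
  rw [← Real.rpow_mul (norm_nonneg x), neg_mul_neg, mul_inv_cancel₀ hp.ne', Real.rpow_one] at h2
  rwa [Metric.mem_closedBall, dist_zero_right]

lemma aux_finite_min (d : ℕ) (hd : 1 ≤ d) {p1 p2 : ℝ} (hp1 : 0 < p1) (hp1d : p1 < d)
    (hp2 : (d : ℝ) < p2) :
    ∫⁻ x : EuclideanSpace ℝ (Fin d),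
      ENNReal.ofReal (min (‖x‖ ^ (-p1)) (‖x‖ ^ (-p2))) < ⊤ := by
  have hp2p : (0:ℝ) < p2 := lt_of_le_of_lt (by positivity) hp2
  set E := EuclideanSpace ℝ (Fin d)
  set f : E → ℝ := fun x => min (‖x‖ ^ (-p1)) (‖x‖ ^ (-p2)) with hf
  have hf_nn : ∀ x, 0 ≤ f x := fun x =>
    le_min (Real.rpow_nonneg (norm_nonneg x) _) (Real.rpow_nonneg (norm_nonneg x) _)
  have hf_m : Measurable f := by fun_prop
  have hballs : ∀ r : ℝ, 0 ≤ r → volume (Metric.closedBall (0:E) r)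
      = ENNReal.ofReal (r ^ (d:ℝ)) * volume (Metric.ball (0:E) 1) := by
    intro r hr
    rw [Measure.addHaar_closedBall _ _ hr, Real.rpow_natCast, finrank_euclideanSpace_fin]
  rw [lintegral_eq_lintegral_meas_le volume (Filter.Eventually.of_forall hf_nn) hf_m.aemeasurable]
  have hmono : ∫⁻ τ in Ioi (0:ℝ), volume {a : E | τ ≤ f a}
      ≤ ∫⁻ τ in Ioc (0:ℝ) 1 ∪ Ioi 1, volume {a : E | τ ≤ f a} :=
    lintegral_mono_set Ioi_subset_Ioc_union_Ioi
  refine lt_of_le_of_lt (hmono.trans (lintegral_union_le _ _ _)) (ENNReal.add_lt_top.2 ⟨?_, ?_⟩)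
  · have hb : ∀ τ ∈ Ioc (0:ℝ) 1, volume {a : E | τ ≤ f a}
        ≤ ENNReal.ofReal (τ ^ (-p2⁻¹ * (d:ℝ))) * volume (Metric.ball (0:E) 1) := by
      intro τ hτ
      have h1 : {a : E | τ ≤ f a} ⊆ Metric.closedBall 0 (τ ^ (-p2⁻¹)) := by
        refine subset_trans ?_ (aux_ball_subset hp2p hτ.1)
        intro x hx
        simp only [mem_setOf_eq, hf] at hx ⊢
        exact le_trans hx (min_le_right _ _)
      refine le_trans (measure_mono h1) ?_
      rw [hballs _ (Real.rpow_nonneg hτ.1.le _), ← Real.rpow_mul hτ.1.le]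
    refine lt_of_le_of_lt (setLIntegral_mono' measurableSet_Ioc hb) ?_
    rw [lintegral_mul_const' _ _ measure_ball_lt_top.ne]
    refine ENNReal.mul_lt_top ?_ measure_ball_lt_top
    have hint : IntegrableOn (fun τ : ℝ => τ ^ (-p2⁻¹ * (d:ℝ))) (Ioc (0:ℝ) 1) := by
      rw [← intervalIntegrable_iff_integrableOn_Ioc_of_le zero_le_one]
      apply intervalIntegral.intervalIntegrable_rpow'
      have : (d:ℝ) / p2 < 1 := (div_lt_one hp2p).2 hp2
      rw [div_eq_inv_mul] at this
      linarith
    exact hint.setLIntegral_lt_top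
  · have hb : ∀ τ ∈ Ioi (1:ℝ), volume {a : E | τ ≤ f a}
        ≤ ENNReal.ofReal (τ ^ (-p1⁻¹ * (d:ℝ))) * volume (Metric.ball (0:E) 1) := by
      intro τ hτ
      have hτ0 : (0:ℝ) < τ := lt_trans one_pos hτ
      have h1 : {a : E | τ ≤ f a} ⊆ Metric.closedBall 0 (τ ^ (-p1⁻¹)) := by
        refine subset_trans ?_ (aux_ball_subset hp1 hτ0)
        intro x hx
        simp only [mem_setOf_eq, hf] at hx ⊢
        exact le_trans hx (min_le_left _ _)
      refine le_trans (measure_mono h1) ?_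
      rw [hballs _ (Real.rpow_nonneg hτ0.le _), ← Real.rpow_mul hτ0.le]
    refine lt_of_le_of_lt (setLIntegral_mono' measurableSet_Ioi hb) ?_
    rw [lintegral_mul_const' _ _ measure_ball_lt_top.ne]
    refine ENNReal.mul_lt_top ?_ measure_ball_lt_top
    have hint : IntegrableOn (fun τ : ℝ => τ ^ (-p1⁻¹ * (d:ℝ))) (Ioi (1:ℝ)) := by
      apply integrableOn_Ioi_rpow_of_lt _ one_pos
      have : (1:ℝ) < (d:ℝ) / p1 := (one_lt_div hp1).2 hp1d
      rw [div_eq_inv_mul] at this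
      linarith
    exact hint.setLIntegral_lt_top

section PKer
variable {d : ℕ} {α : ℝ} {q : EuclideanSpace ℝ (Fin d) → ℝ} {c₂ : ℝ}
variable (hd : 1 ≤ d) (hα0 : 0 < α) (hq0 : ∀ x, 0 ≤ q x) (hc₂ : 0 < c₂)
variable (hq2 : ∀ x, q x ≤ c₂ / (1 + ‖x‖ ^ ((d : ℝ) + α)))

include hq0 in
lemma pker_nonneg {τ : ℝ} (hτ : 0 ≤ τ) (x : EuclideanSpace ℝ (Fin d)) :
    0 ≤ pker d α q τ x :=
  mul_nonneg (Real.rpow_nonneg hτ _) (hq0 _)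

include hc₂ hq2 in
lemma pker_le_a {τ : ℝ} (hτ : 0 ≤ τ) (x : EuclideanSpace ℝ (Fin d)) :
    pker d α q τ x ≤ c₂ * τ ^ (-(d : ℝ) / α) := by
  rw [pker, mul_comm]
  apply mul_le_mul_of_nonneg_right _ (Real.rpow_nonneg hτ _)
  refine (hq2 _).trans ?_
  apply div_le_self hc₂.le
  have := Real.rpow_nonneg (norm_nonneg ((τ ^ (-(1:ℝ) / α)) • x)) ((d : ℝ) + α)
  linarith

include hd hα0 hc₂ hq2 in
lemma pker_le_b {τ : ℝ} (hτ : 0 < τ) {x : EuclideanSpace ℝ (Fin d)} (hx : x ≠ 0) :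
    pker d α q τ x ≤ c₂ * τ * ‖x‖ ^ (-((d : ℝ) + α)) := by
  have hxn : (0:ℝ) < ‖x‖ := norm_pos_iff.2 hx
  have hda : (0:ℝ) < (d : ℝ) + α := by positivity
  have hsm : ‖(τ ^ (-(1:ℝ) / α)) • x‖ = τ ^ (-(1:ℝ) / α) * ‖x‖ := by
    rw [norm_smul, Real.norm_eq_abs, abs_of_pos (Real.rpow_pos_of_pos hτ _)]
  have hnp : (‖(τ ^ (-(1:ℝ) / α)) • x‖) ^ ((d:ℝ) + α)
      = τ ^ ((-(1:ℝ) / α) * ((d:ℝ) + α)) * ‖x‖ ^ ((d:ℝ) + α) := by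
    rw [hsm, Real.mul_rpow (Real.rpow_nonneg hτ.le _) (norm_nonneg _), ← Real.rpow_mul hτ.le]
  have hq' : q ((τ ^ (-(1:ℝ) / α)) • x)
      ≤ c₂ / (τ ^ ((-(1:ℝ) / α) * ((d:ℝ) + α)) * ‖x‖ ^ ((d:ℝ) + α)) := by
    refine (hq2 _).trans ?_
    rw [← hnp]
    apply div_le_div_of_nonneg_left hc₂.le
    · rw [hnp]; positivity
    · have := Real.rpow_nonneg (norm_nonneg ((τ ^ (-(1:ℝ) / α)) • x)) ((d : ℝ) + α)
      linarith
  rw [pker]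
  calc τ ^ (-(d:ℝ) / α) * q ((τ ^ (-(1:ℝ) / α)) • x)
      ≤ τ ^ (-(d:ℝ) / α) * (c₂ / (τ ^ ((-(1:ℝ) / α) * ((d:ℝ) + α)) * ‖x‖ ^ ((d:ℝ) + α))) := by
        apply mul_le_mul_of_nonneg_left hq' (Real.rpow_nonneg hτ.le _)
    _ = c₂ * (τ ^ (-(d:ℝ) / α) * τ ^ (-((-(1:ℝ) / α) * ((d:ℝ) + α)))) * ‖x‖ ^ (-((d:ℝ) + α)) := by
        rw [Real.rpow_neg hτ.le, Real.rpow_neg (norm_nonneg _)]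
        field_simp
    _ = c₂ * τ * ‖x‖ ^ (-((d:ℝ) + α)) := by
        rw [← Real.rpow_add hτ]
        congr 2
        have h1 : -(d:ℝ) / α + -(-(1:ℝ) / α * ((d:ℝ) + α)) = 1 := by field_simp; ring
        rw [h1, Real.rpow_one]

include hd hα0 hc₂ hq2 in
lemma pker_le_c {τ : ℝ} (hτ : 0 < τ) {x : EuclideanSpace ℝ (Fin d)} (hx : x ≠ 0) :
    pker d α q τ x ≤ c₂ * ‖x‖ ^ (-(d : ℝ)) := by
  have hxn : (0:ℝ) < ‖x‖ := norm_pos_iff.2 hx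
  rcases le_or_gt τ (‖x‖ ^ α) with h | h
  · refine (pker_le_b hd hα0 hc₂ hq2 hτ hx).trans ?_
    calc c₂ * τ * ‖x‖ ^ (-((d:ℝ) + α)) ≤ c₂ * ‖x‖ ^ α * ‖x‖ ^ (-((d:ℝ) + α)) := by
          apply mul_le_mul_of_nonneg_right (by nlinarith) (Real.rpow_nonneg (norm_nonneg _) _)
      _ = c₂ * ‖x‖ ^ (-(d : ℝ)) := by
          rw [mul_assoc, ← Real.rpow_add hxn]
          congr 2
          ring
  · refine (pker_le_a hc₂ hq2 hτ.le x).trans ?_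
    apply mul_le_mul_of_nonneg_left _ hc₂.le
    calc τ ^ (-(d:ℝ) / α) ≤ (‖x‖ ^ α) ^ (-(d:ℝ) / α) := by
          apply Real.rpow_le_rpow_of_nonpos (Real.rpow_pos_of_pos hxn _) h.le
          apply div_nonpos_of_nonpos_of_nonneg _ hα0.le
          simp
      _ = ‖x‖ ^ (-(d:ℝ)) := by
          rw [← Real.rpow_mul (norm_nonneg _)]
          congr 1
          field_simp

end PKer

end AuxStmt8

set_option maxHeartbeats 1000000 in
/-- Upper bound (4.3) for `D_T^+` in the regime `α < 2`, `β > d/(d+α)`: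
`∫_{ℝ^d}∫_0^∞ ((U_T+R)^{1+β} − U_T^{1+β} − R^{1+β}) dr dx ≤ C T^{−d/α}` for all `T ≥ 1`. -/
theorem stmt8 (d : ℕ) (hd : 1 ≤ d) (α β : ℝ) (hα0 : 0 < α) (hα2 : α < 2)
    (hβ0 : 0 < β) (hβ1 : β < 1)
    (hdim1 : α / β < d) (hdim2 : (d : ℝ) < α * (1 + β) / β)
    (hreg : (d : ℝ) / (d + α) < β)
    (q : EuclideanSpace ℝ (Fin d) → ℝ) (hqm : Measurable q) (hq0 : ∀ x, 0 ≤ q x)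
    (c₂ : ℝ) (hc₂ : 0 < c₂) (hq2 : ∀ x, q x ≤ c₂ / (1 + ‖x‖ ^ ((d : ℝ) + α)))
    (u v s t z : ℝ) (hu : 0 ≤ u) (huv : u < v) (hvs : v < s) (hst : s < t) (hz : 0 < z)
    (U : ℝ → EuclideanSpace ℝ (Fin d) → ℝ → ℝ)
    (hU : ∀ T x r, U T x r = z *
      ((Set.Icc (0:ℝ) (s + T)).indicator
          (fun _ => ∫ r' in (s + T)..(t + T), pker d α q (r' - r) x) r +
        (Set.Ioc (s + T) (t + T)).indicator
          (fun _ => ∫ r' in r..(t + T), pker d α q (r' - r) x) r))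
    (R : EuclideanSpace ℝ (Fin d) → ℝ → ℝ)
    (hR : ∀ x r, R x r =
      (Set.Icc (0:ℝ) u).indicator (fun _ => ∫ r' in u..v, pker d α q (r' - r) x) r +
        (Set.Ioc u v).indicator (fun _ => ∫ r' in r..v, pker d α q (r' - r) x) r) :
    ∃ C : ℝ, 0 < C ∧ ∀ T : ℝ, 1 ≤ T →
      ∫⁻ x : EuclideanSpace ℝ (Fin d), ∫⁻ r in Set.Ioi (0:ℝ),
          ENNReal.ofReal
            ((U T x r + R x r) ^ (1 + β) - (U T x r) ^ (1 + β) - (R x r) ^ (1 + β))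
        ≤ ENNReal.ofReal (C * T ^ (-(d : ℝ) / α)) := by
  classical
  have hd' : (0:ℝ) < d := by exact_mod_cast hd
  have hv0 : (0:ℝ) < v := lt_of_le_of_lt hu huv
  haveI : Nonempty (Fin d) := ⟨⟨0, hd⟩⟩
  haveI : Nontrivial (EuclideanSpace ℝ (Fin d)) := inferInstance
  have hae0 : ∀ᵐ x : EuclideanSpace ℝ (Fin d) ∂volume, x ≠ 0 := by
    rw [MeasureTheory.ae_iff]
    have hset : {x : EuclideanSpace ℝ (Fin d) | ¬ x ≠ 0} = {(0 : EuclideanSpace ℝ (Fin d))} := by ext y; simp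
    rw [hset]
    exact measure_singleton 0
  set M : ℝ := z * c₂ * (t - s) with hM
  have hM0 : 0 < M := by
    apply mul_pos (mul_pos hz hc₂); linarith
  set Cm : ℝ := c₂ * max 1 v with hCm
  have hCm0 : 0 < Cm := mul_pos hc₂ (lt_of_lt_of_le one_pos (le_max_left _ _))
  set mfun : EuclideanSpace ℝ (Fin d) → ℝ := fun x => min (‖x‖ ^ (-(d:ℝ))) (‖x‖ ^ (-((d:ℝ)+α))) with hmfun
  have hm_nn : ∀ x : EuclideanSpace ℝ (Fin d), 0 ≤ mfun x := fun x =>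
    le_min (Real.rpow_nonneg (norm_nonneg x) _) (Real.rpow_nonneg (norm_nonneg x) _)
  have hpker_min : ∀ (τ : ℝ), 0 < τ → τ ≤ v → ∀ x : EuclideanSpace ℝ (Fin d), x ≠ 0 →
      pker d α q τ x ≤ Cm * mfun x := by
    intro τ hτ0 hτv x hx
    rw [hmfun]
    simp only []
    rw [mul_min_of_nonneg _ _ hCm0.le]
    apply le_min
    · calc pker d α q τ x ≤ c₂ * ‖x‖ ^ (-(d:ℝ)) := pker_le_c hd hα0 hc₂ hq2 hτ0 hx
        _ ≤ Cm * ‖x‖ ^ (-(d:ℝ)) := by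
            apply mul_le_mul_of_nonneg_right _ (Real.rpow_nonneg (norm_nonneg _) _)
            rw [hCm]
            nlinarith [le_max_left (1:ℝ) v]
    · calc pker d α q τ x ≤ c₂ * τ * ‖x‖ ^ (-((d:ℝ)+α)) := pker_le_b hd hα0 hc₂ hq2 hτ0 hx
        _ ≤ Cm * ‖x‖ ^ (-((d:ℝ)+α)) := by
            apply mul_le_mul_of_nonneg_right _ (Real.rpow_nonneg (norm_nonneg _) _)
            rw [hCm]
            nlinarith [le_max_right (1:ℝ) v]
  -- properties of R
  have hRprop : ∀ (x : EuclideanSpace ℝ (Fin d)) (r : ℝ), 0 ≤ R x r ∧ (x ≠ 0 → R x r ≤ Cm * mfun x * v) := by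
    intro x r
    by_cases h1 : r ∈ Set.Icc (0:ℝ) u
    · have h2 : r ∉ Set.Ioc u v := by
        simp only [Set.mem_Ioc, not_and, not_le]
        intro hc
        linarith [h1.2]
      rw [hR, Set.indicator_of_mem h1, Set.indicator_of_notMem h2, add_zero]
      constructor
      · apply intervalIntegral.integral_nonneg huv.le
        intro y hy
        exact pker_nonneg hq0 (by linarith [hy.1, h1.2] : (0:ℝ) ≤ y - r) x
      · intro hx
        have hb : ‖∫ r' in u..v, pker d α q (r' - r) x‖ ≤ Cm * mfun x * |v - u| := by
          apply intervalIntegral.norm_integral_le_of_norm_le_const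
          intro y hy
          rw [Set.uIoc_of_le huv.le] at hy
          have hτ0 : 0 < y - r := by linarith [h1.2, hy.1]
          have hτv : y - r ≤ v := by linarith [h1.1, hy.2]
          rw [Real.norm_eq_abs, abs_of_nonneg (pker_nonneg hq0 hτ0.le x)]
          exact hpker_min _ hτ0 hτv x hx
        rw [Real.norm_eq_abs] at hb
        calc (∫ r' in u..v, pker d α q (r' - r) x) ≤ |∫ r' in u..v, pker d α q (r' - r) x| :=
              le_abs_self _
          _ ≤ Cm * mfun x * |v - u| := hb
          _ ≤ Cm * mfun x * v := by
              apply mul_le_mul_of_nonneg_left _ (mul_nonneg hCm0.le (hm_nn x))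
              rw [abs_of_nonneg (by linarith : (0:ℝ) ≤ v - u)]
              linarith
    · by_cases h2 : r ∈ Set.Ioc u v
      · rw [hR, Set.indicator_of_notMem h1, Set.indicator_of_mem h2, zero_add]
        have hr0 : 0 < r := lt_of_le_of_lt hu h2.1
        constructor
        · apply intervalIntegral.integral_nonneg h2.2
          intro y hy
          exact pker_nonneg hq0 (by linarith [hy.1] : (0:ℝ) ≤ y - r) x
        · intro hx
          have hb : ‖∫ r' in r..v, pker d α q (r' - r) x‖ ≤ Cm * mfun x * |v - r| := by
            apply intervalIntegral.norm_integral_le_of_norm_le_const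
            intro y hy
            rw [Set.uIoc_of_le h2.2] at hy
            have hτ0 : 0 < y - r := by linarith [hy.1]
            have hτv : y - r ≤ v := by linarith [hy.2]
            rw [Real.norm_eq_abs, abs_of_nonneg (pker_nonneg hq0 hτ0.le x)]
            exact hpker_min _ hτ0 hτv x hx
          rw [Real.norm_eq_abs] at hb
          calc (∫ r' in r..v, pker d α q (r' - r) x) ≤ |∫ r' in r..v, pker d α q (r' - r) x| :=
                le_abs_self _
            _ ≤ Cm * mfun x * |v - r| := hb
            _ ≤ Cm * mfun x * v := by
                apply mul_le_mul_of_nonneg_left _ (mul_nonneg hCm0.le (hm_nn x))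
                rw [abs_of_nonneg (by linarith [h2.2] : (0:ℝ) ≤ v - r)]
                linarith
      · rw [hR, Set.indicator_of_notMem h1, Set.indicator_of_notMem h2, add_zero]
        exact ⟨le_refl _, fun _ => mul_nonneg (mul_nonneg hCm0.le (hm_nn x)) hv0.le⟩
  -- properties of U
  have hexp_nonpos : -(d:ℝ)/α ≤ 0 :=
    div_nonpos_of_nonpos_of_nonneg (neg_nonpos.2 hd'.le) hα0.le
  have hUprop : ∀ T : ℝ, 1 ≤ T → ∀ (x : EuclideanSpace ℝ (Fin d)) (r : ℝ),
      0 ≤ U T x r ∧ (r ≤ v → U T x r ≤ M * T ^ (-(d:ℝ)/α)) := by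
    intro T hT x r
    have hT0 : (0:ℝ) < T := by linarith
    have hi1 : 0 ≤ (Set.Icc (0:ℝ) (s + T)).indicator
        (fun _ => ∫ r' in (s + T)..(t + T), pker d α q (r' - r) x) r := by
      by_cases hm : r ∈ Set.Icc (0:ℝ) (s + T)
      · rw [Set.indicator_of_mem hm]
        apply intervalIntegral.integral_nonneg (by linarith : s + T ≤ t + T)
        intro y hy
        exact pker_nonneg hq0 (by linarith [hy.1, hm.2] : (0:ℝ) ≤ y - r) x
      · rw [Set.indicator_of_notMem hm]
    have hi2 : 0 ≤ (Set.Ioc (s + T) (t + T)).indicator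
        (fun _ => ∫ r' in r..(t + T), pker d α q (r' - r) x) r := by
      by_cases hm : r ∈ Set.Ioc (s + T) (t + T)
      · rw [Set.indicator_of_mem hm]
        apply intervalIntegral.integral_nonneg hm.2
        intro y hy
        exact pker_nonneg hq0 (by linarith [hy.1] : (0:ℝ) ≤ y - r) x
      · rw [Set.indicator_of_notMem hm]
    constructor
    · rw [hU]
      exact mul_nonneg hz.le (add_nonneg hi1 hi2)
    · intro hrv
      have h2 : r ∉ Set.Ioc (s + T) (t + T) := by
        simp only [Set.mem_Ioc, not_and, not_le]
        intro hc
        linarith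
      rw [hU, Set.indicator_of_notMem h2, add_zero]
      have hMT0 : 0 ≤ M * T ^ (-(d:ℝ)/α) :=
        mul_nonneg hM0.le (Real.rpow_nonneg hT0.le _)
      by_cases h1 : r ∈ Set.Icc (0:ℝ) (s + T)
      · rw [Set.indicator_of_mem h1]
        have hb : ‖∫ r' in (s + T)..(t + T), pker d α q (r' - r) x‖
            ≤ (c₂ * T ^ (-(d:ℝ)/α)) * |(t + T) - (s + T)| := by
          apply intervalIntegral.norm_integral_le_of_norm_le_const
          intro y hy
          rw [Set.uIoc_of_le (by linarith : s + T ≤ t + T)] at hy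
          have hτT : T ≤ y - r := by linarith [hy.1]
          have hτ0 : (0:ℝ) < y - r := lt_of_lt_of_le hT0 hτT
          rw [Real.norm_eq_abs, abs_of_nonneg (pker_nonneg hq0 hτ0.le x)]
          calc pker d α q (y - r) x ≤ c₂ * (y - r) ^ (-(d:ℝ)/α) :=
                pker_le_a hc₂ hq2 hτ0.le x
            _ ≤ c₂ * T ^ (-(d:ℝ)/α) := by
                apply mul_le_mul_of_nonneg_left _ hc₂.le
                exact Real.rpow_le_rpow_of_nonpos hT0 hτT hexp_nonpos
        rw [Real.norm_eq_abs] at hb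
        have habs : |(t + T) - (s + T)| = t - s := by
          rw [abs_of_nonneg (by linarith : (0:ℝ) ≤ (t + T) - (s + T))]
          ring
        rw [habs] at hb
        calc z * ∫ r' in (s + T)..(t + T), pker d α q (r' - r) x
            ≤ z * |∫ r' in (s + T)..(t + T), pker d α q (r' - r) x| :=
              mul_le_mul_of_nonneg_left (le_abs_self _) hz.le
          _ ≤ z * ((c₂ * T ^ (-(d:ℝ)/α)) * (t - s)) :=
              mul_le_mul_of_nonneg_left hb hz.le
          _ = M * T ^ (-(d:ℝ)/α) := by rw [hM]; ring
      · rw [Set.indicator_of_notMem h1, mul_zero]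
        exact hMT0
  -- the dominating function W and its finiteness
  set W : EuclideanSpace ℝ (Fin d) → ENNReal := fun x => ENNReal.ofReal ((Cm * v) ^ β) *
    ENNReal.ofReal (min (‖x‖ ^ (-((d:ℝ) * β))) (‖x‖ ^ (-(((d:ℝ)+α) * β)))) with hW
  have hfin : ∫⁻ x : EuclideanSpace ℝ (Fin d), W x < ⊤ := by
    rw [hW, lintegral_const_mul' _ _ ENNReal.ofReal_ne_top]
    refine ENNReal.mul_lt_top ENNReal.ofReal_lt_top ?_
    apply aux_finite_min d hd
    · positivity
    · nlinarith
    · have hda : (0:ℝ) < (d:ℝ) + α := by positivity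
      have := (div_lt_iff₀ hda).1 hreg
      nlinarith
  set KW : ℝ := (∫⁻ x : EuclideanSpace ℝ (Fin d), W x).toReal with hKW'
  have hKW : ∫⁻ x : EuclideanSpace ℝ (Fin d), W x ≤ ENNReal.ofReal KW :=
    le_of_eq (ENNReal.ofReal_toReal hfin.ne).symm
  have hKW0 : 0 ≤ KW := ENNReal.toReal_nonneg
  -- pointwise bound on R^β
  have hRβ : ∀ x : EuclideanSpace ℝ (Fin d), x ≠ 0 → ∀ r ∈ Set.Ioi (0:ℝ),
      ENNReal.ofReal (R x r ^ β) ≤ (Set.Ioc (0:ℝ) v).indicator (fun _ => W x) r := by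
    intro x hx r hr
    by_cases hrv : r ≤ v
    · have hmem : r ∈ Set.Ioc (0:ℝ) v := ⟨hr, hrv⟩
      rw [Set.indicator_of_mem hmem]
      have h1 : R x r ^ β ≤ (Cm * mfun x * v) ^ β :=
        Real.rpow_le_rpow ((hRprop x r).1) ((hRprop x r).2 hx) hβ0.le
      have h2 : (Cm * mfun x * v) ^ β = (Cm * v) ^ β * (mfun x) ^ β := by
        rw [show Cm * mfun x * v = (Cm * v) * mfun x by ring,
          Real.mul_rpow (by positivity) (hm_nn x)]
      have h3 : (mfun x) ^ β
          = min (‖x‖ ^ (-((d:ℝ) * β))) (‖x‖ ^ (-(((d:ℝ)+α) * β))) := by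
        rw [hmfun]
        simp only []
        rw [aux_min_rpow (Real.rpow_nonneg (norm_nonneg x) _)
          (Real.rpow_nonneg (norm_nonneg x) _) hβ0.le,
          ← Real.rpow_mul (norm_nonneg _), ← Real.rpow_mul (norm_nonneg _),
          neg_mul, neg_mul]
      rw [hW]
      simp only []
      rw [← ENNReal.ofReal_mul (by positivity : (0:ℝ) ≤ (Cm * v) ^ β)]
      apply ENNReal.ofReal_le_ofReal
      rw [← h3, ← h2]
      exact h1
    · have hnm1 : r ∉ Set.Icc (0:ℝ) u := by
        simp only [Set.mem_Icc, not_and, not_le]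
        intro hc
        linarith
      have hnm2 : r ∉ Set.Ioc u v := by
        simp only [Set.mem_Ioc, not_and, not_le]
        intro hc
        linarith
      have hR0 : R x r = 0 := by
        rw [hR, Set.indicator_of_notMem hnm1, Set.indicator_of_notMem hnm2, add_zero]
      rw [hR0, Real.zero_rpow hβ0.ne']
      simp
  refine ⟨(1 + β) * M * v * (KW + 1), mul_pos (mul_pos (mul_pos (by linarith : (0:ℝ) < 1 + β) hM0) hv0) (by linarith : (0:ℝ) < KW + 1), ?_⟩
  intro T hT
  have hT0 : (0:ℝ) < T := by linarith
  set K : ℝ := (1 + β) * M * T ^ (-(d:ℝ)/α) with hK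
  have hK0 : 0 ≤ K :=
    mul_nonneg (mul_nonneg (by linarith) hM0.le) (Real.rpow_nonneg hT0.le _)
  have step1 : ∀ (x : EuclideanSpace ℝ (Fin d)) (r : ℝ),
      ENNReal.ofReal ((U T x r + R x r) ^ (1 + β) - (U T x r) ^ (1 + β) - (R x r) ^ (1 + β))
        ≤ ENNReal.ofReal K * ENNReal.ofReal (R x r ^ β) := by
    intro x r
    by_cases hrv : r ≤ v
    · have h1 := aux_key_pointwise ((hRprop x r).1) ((hUprop T hT x r).1) hβ0 hβ1
      have hUb := (hUprop T hT x r).2 hrv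
      have hRb := Real.rpow_nonneg ((hRprop x r).1) β
      have h2 : (U T x r + R x r) ^ (1 + β) - (U T x r) ^ (1 + β) - (R x r) ^ (1 + β)
          ≤ K * (R x r ^ β) := by
        have e1 : U T x r + R x r = R x r + U T x r := by ring
        rw [e1]
        calc (R x r + U T x r) ^ (1 + β) - (U T x r) ^ (1 + β) - (R x r) ^ (1 + β)
            = (R x r + U T x r) ^ (1 + β) - (R x r) ^ (1 + β) - (U T x r) ^ (1 + β) := by ring
          _ ≤ (1 + β) * U T x r * (R x r) ^ β := h1
          _ ≤ (1 + β) * (M * T ^ (-(d:ℝ)/α)) * (R x r) ^ β :=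
              mul_le_mul_of_nonneg_right
                (mul_le_mul_of_nonneg_left hUb (by linarith)) hRb
          _ = K * (R x r ^ β) := by rw [hK]; ring
      exact le_trans (ENNReal.ofReal_le_ofReal h2) (le_of_eq (ENNReal.ofReal_mul hK0))
    · have hnm1 : r ∉ Set.Icc (0:ℝ) u := by
        simp only [Set.mem_Icc, not_and, not_le]
        intro hc
        linarith
      have hnm2 : r ∉ Set.Ioc u v := by
        simp only [Set.mem_Ioc, not_and, not_le]
        intro hc
        linarith
      have hR0 : R x r = 0 := by
        rw [hR, Set.indicator_of_notMem hnm1, Set.indicator_of_notMem hnm2, add_zero]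
      rw [hR0]
      have hz0 : (U T x r + 0) ^ (1 + β) - (U T x r) ^ (1 + β) - (0:ℝ) ^ (1 + β) = 0 := by
        rw [add_zero, Real.zero_rpow (by positivity : (1:ℝ) + β ≠ 0)]
        ring
      rw [hz0]
      simp
  have key_inner : ∀ x : EuclideanSpace ℝ (Fin d), x ≠ 0 →
      (∫⁻ r in Set.Ioi (0:ℝ), ENNReal.ofReal
        ((U T x r + R x r) ^ (1 + β) - (U T x r) ^ (1 + β) - (R x r) ^ (1 + β)))
        ≤ ENNReal.ofReal K * (W x * ENNReal.ofReal v) := by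
    intro x hx
    calc (∫⁻ r in Set.Ioi (0:ℝ), ENNReal.ofReal
          ((U T x r + R x r) ^ (1 + β) - (U T x r) ^ (1 + β) - (R x r) ^ (1 + β)))
        ≤ ∫⁻ r in Set.Ioi (0:ℝ), ENNReal.ofReal K * ENNReal.ofReal (R x r ^ β) :=
          lintegral_mono (fun r => step1 x r)
      _ = ENNReal.ofReal K * ∫⁻ r in Set.Ioi (0:ℝ), ENNReal.ofReal (R x r ^ β) :=
          lintegral_const_mul' _ _ ENNReal.ofReal_ne_top
      _ ≤ ENNReal.ofReal K * (W x * ENNReal.ofReal v) := by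
          apply mul_le_mul_right
          calc (∫⁻ r in Set.Ioi (0:ℝ), ENNReal.ofReal (R x r ^ β))
              ≤ ∫⁻ r in Set.Ioi (0:ℝ), (Set.Ioc (0:ℝ) v).indicator (fun _ => W x) r :=
                setLIntegral_mono' measurableSet_Ioi (hRβ x hx)
            _ = W x * (volume.restrict (Set.Ioi (0:ℝ))) (Set.Ioc (0:ℝ) v) := by
                rw [lintegral_indicator measurableSet_Ioc, setLIntegral_const]
            _ ≤ W x * ENNReal.ofReal v := by
                apply mul_le_mul_right
                rw [Measure.restrict_apply measurableSet_Ioc]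
                refine le_trans (measure_mono Set.inter_subset_left) ?_
                rw [Real.volume_Ioc]
                exact le_of_eq (by rw [sub_zero])
  calc (∫⁻ x : EuclideanSpace ℝ (Fin d), ∫⁻ r in Set.Ioi (0:ℝ), ENNReal.ofReal
        ((U T x r + R x r) ^ (1 + β) - (U T x r) ^ (1 + β) - (R x r) ^ (1 + β)))
      ≤ ∫⁻ x : EuclideanSpace ℝ (Fin d), ENNReal.ofReal K * (W x * ENNReal.ofReal v) :=
        lintegral_mono_ae (hae0.mono fun x hx => key_inner x hx)
    _ = (ENNReal.ofReal K * ENNReal.ofReal v) * ∫⁻ x : EuclideanSpace ℝ (Fin d), W x := by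
        rw [← lintegral_const_mul' _ _
          (ENNReal.mul_ne_top ENNReal.ofReal_ne_top ENNReal.ofReal_ne_top)]
        congr 1
        funext x
        ring
    _ ≤ (ENNReal.ofReal K * ENNReal.ofReal v) * ENNReal.ofReal KW := mul_le_mul_right hKW _
    _ ≤ ENNReal.ofReal ((1 + β) * M * v * (KW + 1) * T ^ (-(d:ℝ)/α)) := by
        rw [← ENNReal.ofReal_mul hK0,
          ← ENNReal.ofReal_mul (mul_nonneg hK0 hv0.le)]
        apply ENNReal.ofReal_le_ofReal
        have hTe : 0 ≤ T ^ (-(d:ℝ)/α) := Real.rpow_nonneg hT0.le _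
        rw [hK]
        nlinarith [mul_nonneg (mul_nonneg (mul_nonneg
          (by linarith : (0:ℝ) ≤ 1 + β) hM0.le) hTe) hv0.le]
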